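/- Let G and G' be two graphs on the same vertex set V of v vertices, let k and t be integers with t ≤ min(k, v − k). If G and G' are k-hypomorphic up to complementation, then G and G' are t-hypomorphic up to complementation. -/

import Mathlib

open SimpleGraph

/-- The claw `K_{1,3}`: vertex 0 joined to each of the pairwise
    nonadjacent vertices 1, 2, 3. -/
def claw : SimpleGraph (Fin 4) := SimpleGraph.fromRel (fun a _ => a = 0)

/-- A graph is claw-free if it has no induced subgraph isomorphic to `K_{1,3}`. -/
def ClawFree {V : Type*} (G : SimpleGraph V) : Prop := IsEmpty (claw ↪g G)

/-- `G` and `H` are isomorphic up to complementation. -/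
def IsoUpToCompl {V W : Type*} (G : SimpleGraph V) (H : SimpleGraph W) : Prop :=
  Nonempty (G ≃g H) ∨ Nonempty (G ≃g Hᶜ)

/-- `G` and `G'` are `k`-hypomorphic up to complementation: for every
    `k`-element set `K` of vertices, the induced subgraphs on `K` are
    isomorphic up to complementation. -/
def HypoUpToCompl {V : Type*} (G G' : SimpleGraph V) (k : ℕ) : Prop :=
  ∀ K : Finset V, K.card = k →
    IsoUpToCompl (G.induce (K : Set V)) (G'.induce (K : Set V))

open Finset

def isoCompl {α β : Type*} {X : SimpleGraph α} {Y : SimpleGraph β} (e : X ≃g Y) : Xᶜ ≃g Yᶜ where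
  toEquiv := e.toEquiv
  map_rel_iff' := by
    intro a b
    simp only [compl_adj, RelIso.coe_fn_toEquiv]
    rw [e.map_adj_iff]
    simp [EmbeddingLike.apply_eq_iff_eq]

lemma isoUpToCompl_congr {α β γ : Type*} {X : SimpleGraph α} {Y : SimpleGraph β}
    {H : SimpleGraph γ} (e : X ≃g Y) : IsoUpToCompl X H ↔ IsoUpToCompl Y H := by
  constructor <;> intro h <;> obtain ⟨⟨f⟩⟩ | ⟨⟨f⟩⟩ := h
  · exact Or.inl ⟨e.symm.trans f⟩
  · exact Or.inr ⟨e.symm.trans f⟩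
  · exact Or.inl ⟨e.trans f⟩
  · exact Or.inr ⟨e.trans f⟩

lemma isoUpToCompl_compl_left {α γ : Type*} {X : SimpleGraph α} {H : SimpleGraph γ} :
    IsoUpToCompl Xᶜ H ↔ IsoUpToCompl X H := by
  constructor <;> intro h <;> obtain ⟨⟨f⟩⟩ | ⟨⟨f⟩⟩ := h
  · exact Or.inr ⟨(compl_compl X) ▸ (isoCompl f) ⟩
  · exact Or.inl ⟨(compl_compl X) ▸ (compl_compl H) ▸ (isoCompl f)⟩
  · exact Or.inr ⟨isoCompl f⟩
  · exact Or.inl ⟨(compl_compl H) ▸ (isoCompl f)⟩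

lemma induce_compl_eq {V : Type*} (G : SimpleGraph V) (s : Set V) :
    (Gᶜ).induce s = (G.induce s)ᶜ := by
  ext a b
  simp [compl_adj, Subtype.coe_ne_coe]

section Transfer
open scoped Classical

variable {V : Type*} {W : Type*}

namespace HypoAux

variable (G H₂ : SimpleGraph V) (L : Finset V)

/-- extend the vertex bijection of an iso between induced subgraphs on `L`
to a total function on `V`. -/
noncomputable def extFun (e : G.induce (L : Set V) ≃g H₂.induce (L : Set V)) : V → V :=
  fun a => if h : a ∈ L then (e ⟨a, Finset.mem_coe.mpr h⟩ : V) else a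

variable {G H₂ L}

lemma extFun_mem (e : G.induce (L : Set V) ≃g H₂.induce (L : Set V)) {a : V} (ha : a ∈ L) :
    extFun G H₂ L e a ∈ L := by
  simp only [extFun, dif_pos ha]
  exact Finset.mem_coe.mp (e ⟨a, Finset.mem_coe.mpr ha⟩).2

lemma extFun_symm_apply (e : G.induce (L : Set V) ≃g H₂.induce (L : Set V)) {a : V}
    (ha : a ∈ L) : extFun H₂ G L e.symm (extFun G H₂ L e a) = a := by
  have h1 : extFun G H₂ L e a = (e ⟨a, Finset.mem_coe.mpr ha⟩ : V) := dif_pos ha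
  have h2 : extFun G H₂ L e a ∈ L := extFun_mem e ha
  rw [h1] at h2 ⊢
  rw [extFun, dif_pos h2]
  have : (⟨(e ⟨a, Finset.mem_coe.mpr ha⟩ : V), Finset.mem_coe.mpr h2⟩ :
      (L : Set V)) = e ⟨a, Finset.mem_coe.mpr ha⟩ := rfl
  rw [this, RelIso.symm_apply_apply]

lemma extFun_adj (e : G.induce (L : Set V) ≃g H₂.induce (L : Set V)) {a b : V}
    (ha : a ∈ L) (hb : b ∈ L) :
    G.Adj a b ↔ H₂.Adj (extFun G H₂ L e a) (extFun G H₂ L e b) := by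
  rw [extFun, extFun, dif_pos ha, dif_pos hb]
  have := e.map_adj_iff (v := ⟨a, Finset.mem_coe.mpr ha⟩) (w := ⟨b, Finset.mem_coe.mpr hb⟩)
  simpa [comap_adj] using this.symm

end HypoAux

end Transfer

section Transfer2
open scoped Classical

variable {V : Type*} {W : Type*}

namespace HypoAux

variable {G H₂ : SimpleGraph V} {L : Finset V}

lemma image_mem_powersetCard {t : ℕ} (e : G.induce (L : Set V) ≃g H₂.induce (L : Set V))
    {A : Finset V} (hA : A ∈ L.powersetCard t) :
    A.image (extFun G H₂ L e) ∈ L.powersetCard t := by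
  classical
  rw [Finset.mem_powersetCard] at hA ⊢
  obtain ⟨hAL, hAcard⟩ := hA
  constructor
  · intro b hb
    obtain ⟨a, haA, rfl⟩ := Finset.mem_image.mp hb
    exact extFun_mem e (hAL haA)
  · rw [Finset.card_image_of_injOn, hAcard]
    intro a ha b hb hab
    have := congrArg (extFun H₂ G L e.symm) hab
    rwa [extFun_symm_apply e (hAL ha), extFun_symm_apply e (hAL hb)] at this

lemma image_image_symm (e : G.induce (L : Set V) ≃g H₂.induce (L : Set V))
    {A : Finset V} (hAL : A ⊆ L) :
    (A.image (extFun G H₂ L e)).image (extFun H₂ G L e.symm) = A := by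
  classical
  rw [Finset.image_image]
  have : ∀ a ∈ A, (extFun H₂ G L e.symm ∘ extFun G H₂ L e) a = id a := by
    intro a ha; exact extFun_symm_apply e (hAL ha)
  rw [Finset.image_congr this, Finset.image_id]

/-- the induced subgraph on `A ⊆ L` is isomorphic to the induced subgraph on the image. -/
noncomputable def smallIso (e : G.induce (L : Set V) ≃g H₂.induce (L : Set V))
    {A : Finset V} (hAL : A ⊆ L) :
    G.induce (A : Set V) ≃g H₂.induce ((A.image (extFun G H₂ L e) : Finset V) : Set V) := by
  classical
  refine ⟨Equiv.ofBijective (fun x => ⟨extFun G H₂ L e x.1, ?_⟩) ⟨?_, ?_⟩, ?_⟩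
  · exact Finset.mem_coe.mpr (Finset.mem_image_of_mem _ (Finset.mem_coe.mp x.2))
  · intro x y hxy
    have h1 := congrArg Subtype.val hxy
    have := congrArg (extFun H₂ G L e.symm) h1
    rw [extFun_symm_apply e (hAL (Finset.mem_coe.mp x.2)),
      extFun_symm_apply e (hAL (Finset.mem_coe.mp y.2))] at this
    exact Subtype.ext this
  · rintro ⟨b, hb⟩
    obtain ⟨a, haA, rfl⟩ := Finset.mem_image.mp (Finset.mem_coe.mp hb)
    exact ⟨⟨a, Finset.mem_coe.mpr haA⟩, rfl⟩
  · intro x y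
    simp only [comap_adj, Equiv.ofBijective_apply, Function.Embedding.coe_subtype]
    exact (extFun_adj e (hAL (Finset.mem_coe.mp x.2)) (hAL (Finset.mem_coe.mp y.2))).symm

lemma key_sum_aux (H : SimpleGraph W) (t : ℕ)
    (e : G.induce (L : Set V) ≃g H₂.induce (L : Set V)) :
    ∑ A ∈ L.powersetCard t, (if IsoUpToCompl (G.induce (A : Set V)) H then (1 : ℚ) else 0)
      = ∑ A ∈ L.powersetCard t,
        (if IsoUpToCompl (H₂.induce (A : Set V)) H then (1 : ℚ) else 0) := by
  classical
  refine Finset.sum_nbij' (fun A => A.image (extFun G H₂ L e))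
    (fun B => B.image (extFun H₂ G L e.symm)) ?_ ?_ ?_ ?_ ?_
  · intro A hA; exact image_mem_powersetCard e hA
  · intro B hB; exact image_mem_powersetCard e.symm hB
  · intro A hA
    exact image_image_symm e (Finset.mem_powersetCard.mp hA).1
  · intro B hB
    have := image_image_symm e.symm (L := L) (Finset.mem_powersetCard.mp hB).1
    simpa using this
  · intro A hA
    refine if_congr ?_ rfl rfl
    exact isoUpToCompl_congr (smallIso e (Finset.mem_powersetCard.mp hA).1)

end HypoAux

end Transfer2

section KeySum
open scoped Classical
variable {V : Type*} {W : Type*}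

lemma key_sum (G G' : SimpleGraph V) (H : SimpleGraph W) (t : ℕ) (L : Finset V)
    (hL : IsoUpToCompl (G.induce (L : Set V)) (G'.induce (L : Set V))) :
    ∑ A ∈ L.powersetCard t, (if IsoUpToCompl (G.induce (A : Set V)) H then (1 : ℚ) else 0)
      = ∑ A ∈ L.powersetCard t,
        (if IsoUpToCompl (G'.induce (A : Set V)) H then (1 : ℚ) else 0) := by
  obtain ⟨⟨e⟩⟩ | ⟨⟨e⟩⟩ := hL
  · exact HypoAux.key_sum_aux H t e
  · have e' : G.induce (L : Set V) ≃g (G'ᶜ).induce (L : Set V) := by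
      rw [induce_compl_eq]; exact e
    rw [HypoAux.key_sum_aux H t e']
    refine Finset.sum_congr rfl fun A hA => if_congr ?_ rfl rfl
    rw [induce_compl_eq]
    exact isoUpToCompl_compl_left
end KeySum

section LinAlg
open Finset
variable {V : Type*} [DecidableEq V]

/-- the key kernel lemma for inclusion sums, in "disjointness" form on an
ambient finset `S`. -/
lemma claim_lemma (n : ℕ) : ∀ (t : ℕ) (S : Finset V) (g : Finset V → ℚ), S.card = n →
    2 * t ≤ n →
    (∀ m ≤ t, ∀ M ⊆ S, M.card = m → ∑ K ∈ (S \ M).powersetCard t, g K = 0) →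
    ∀ K ⊆ S, K.card = t → g K = 0 := by
  induction n using Nat.strong_induction_on with
  | _ n IH =>
    intro t S g hS hn hrel K hKS hK
    match t, hn, hK with
    | 0, hn, hK =>
      have h0 := hrel 0 le_rfl ∅ (empty_subset S) rfl
      rw [sdiff_empty, powersetCard_zero, sum_singleton] at h0
      rwa [card_eq_zero.mp hK]
    | (t+1), hn, hK =>
      rcases eq_or_lt_of_le hn with heq | hlt
      · -- base case : S.card = 2*(t+1)
        have hM : (S \ K) ⊆ S := sdiff_subset
        have hMcard : (S \ K).card = t + 1 := by
          rw [card_sdiff_of_subset hKS, hS, hK]; omega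
        have h0 := hrel (t+1) le_rfl (S \ K) hM hMcard
        rw [Finset.sdiff_sdiff_eq_self hKS, ← hK, powersetCard_self, sum_singleton] at h0
        exact h0
      · -- step : S.card ≥ 2*(t+1)+1
        have hpos : 0 < S.card := by omega
        obtain ⟨x, hx⟩ := card_pos.mp hpos
        set S' := S.erase x with hS'
        have hS'card : S'.card = n - 1 := by rw [hS', card_erase_of_mem hx, hS]
        have hsub' : S' ⊆ S := erase_subset _ _
        -- Step 1 : g vanishes on (t)-subsets of S' after inserting x
        have step1 : ∀ A ⊆ S', A.card = t → g (insert x A) = 0 := by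
          intro A hAS' hAcard
          refine IH (n-1) (by omega) t S' (fun B => g (insert x B)) hS'card (by omega)
            ?_ A hAS' hAcard
          intro m hm M' hM'S' hM'card
          have hxM' : x ∉ M' := fun hc => (mem_erase.mp (hM'S' hc)).1 rfl
          have hxT : x ∈ S \ M' := mem_sdiff.mpr ⟨hx, hxM'⟩
          have herase : (S \ M').erase x = S' \ M' := by
            ext a; simp only [hS', mem_erase, mem_sdiff]; tauto
          have hsplit := hrel m (by omega) M' (hM'S'.trans hsub') hM'card
          rw [← insert_erase hxT, powersetCard_succ_insert (notMem_erase x _)] at hsplit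
          rw [sum_union, sum_image] at hsplit
          · have hzero : ∑ K ∈ ((S \ M').erase x).powersetCard (t+1), g K = 0 := by
              have hins : insert x M' ⊆ S := insert_subset hx (hM'S'.trans hsub')
              have hinscard : (insert x M').card = m + 1 :=
                by rw [card_insert_of_notMem hxM', hM'card]
              have h2 := hrel (m+1) (by omega) (insert x M') hins hinscard
              have : S \ insert x M' = (S \ M').erase x := by
                ext a; simp only [mem_erase, mem_sdiff, mem_insert]; tauto
              rwa [this] at h2
            rw [hzero, zero_add] at hsplit
            rwa [herase] at hsplit
          · -- injectivity for sum_image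
            intro A1 h1 A2 h2 h12
            have hx1 : x ∉ A1 := fun hc =>
              (notMem_erase x (S \ M')) ((mem_powersetCard.mp h1).1 hc)
            have hx2 : x ∉ A2 := fun hc =>
              (notMem_erase x (S \ M')) ((mem_powersetCard.mp h2).1 hc)
            rw [← erase_insert hx1, ← erase_insert hx2, h12]
          · -- disjointness for sum_union
            rw [Finset.disjoint_left]
            intro A hA hA'
            obtain ⟨B, hB, rfl⟩ := mem_image.mp hA'
            exact (notMem_erase x (S \ M')) ((mem_powersetCard.mp hA).1 (mem_insert_self x B))
        -- Step 2 : g vanishes on (t+1)-subsets of S'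
        have step2 : ∀ A ⊆ S', A.card = t + 1 → g A = 0 := by
          intro A hAS' hAcard
          refine IH (n-1) (by omega) (t+1) S' g hS'card (by omega) ?_ A hAS' hAcard
          intro m hm M hMS' hMcard
          have hxM : x ∉ M := fun hc => (mem_erase.mp (hMS' hc)).1 rfl
          have hxT : x ∈ S \ M := mem_sdiff.mpr ⟨hx, hxM⟩
          have herase : (S \ M).erase x = S' \ M := by
            ext a; simp only [hS', mem_erase, mem_sdiff]; tauto
          have hsplit := hrel m hm M (hMS'.trans hsub') hMcard
          rw [← insert_erase hxT, powersetCard_succ_insert (notMem_erase x _)] at hsplit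
          rw [sum_union, sum_image] at hsplit
          · have hzero : ∑ B ∈ ((S \ M).erase x).powersetCard t, g (insert x B) = 0 := by
              refine sum_eq_zero fun B hB => ?_
              have hB' := mem_powersetCard.mp hB
              refine step1 B ?_ hB'.2
              rw [herase] at hB'
              exact hB'.1.trans sdiff_subset
            rw [hzero, add_zero] at hsplit
            rwa [herase] at hsplit
          · intro A1 h1 A2 h2 h12
            have hx1 : x ∉ A1 := fun hc =>
              (notMem_erase x (S \ M)) ((mem_powersetCard.mp h1).1 hc)
            have hx2 : x ∉ A2 := fun hc =>
              (notMem_erase x (S \ M)) ((mem_powersetCard.mp h2).1 hc)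
            rw [← erase_insert hx1, ← erase_insert hx2, h12]
          · rw [Finset.disjoint_left]
            intro A1 hA1 hA1'
            obtain ⟨B, hB, rfl⟩ := mem_image.mp hA1'
            exact (notMem_erase x (S \ M)) ((mem_powersetCard.mp hA1).1 (mem_insert_self x B))
        -- conclude
        by_cases hxK : x ∈ K
        · have : K = insert x (K.erase x) := (insert_erase hxK).symm
          rw [this]
          refine step1 (K.erase x) ?_ ?_
          · intro a ha
            exact mem_erase.mpr ⟨(mem_erase.mp ha).1, hKS (mem_of_mem_erase ha)⟩
          · rw [card_erase_of_mem hxK, hK]; omega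
        · refine step2 K (fun a ha => mem_erase.mpr ⟨fun hc => hxK (hc ▸ ha), hKS ha⟩) hK
end LinAlg

section StepDown
open Finset
variable {V : Type*} [Fintype V] [DecidableEq V]

lemma stepdown (g : Finset V → ℚ) (t m : ℕ) (hm : 1 ≤ m) (hmt : m + t ≤ Fintype.card V)
    (h : ∀ M : Finset V, M.card = m → ∑ K ∈ Mᶜ.powersetCard t, g K = 0) :
    ∀ M : Finset V, M.card = m - 1 → ∑ K ∈ Mᶜ.powersetCard t, g K = 0 := by
  intro M hM
  have hsum : ∑ x ∈ Mᶜ, ∑ K ∈ ((insert x M)ᶜ).powersetCard t, g K = 0 := by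
    refine sum_eq_zero fun x hxm => h _ ?_
    rw [card_insert_of_notMem (by simpa using hxm)]
    omega
  have hrw : ∀ x ∈ Mᶜ, ∑ K ∈ ((insert x M)ᶜ).powersetCard t, g K
      = ∑ K ∈ Mᶜ.powersetCard t, (if x ∉ K then g K else 0) := by
    intro x hxm
    have h1 : (insert x M)ᶜ = Mᶜ.erase x := by
      ext a; simp only [mem_compl, mem_insert, mem_erase]; tauto
    have hpc : (Mᶜ.erase x).powersetCard t
        = (Mᶜ.powersetCard t).filter (fun K => x ∉ K) := by
      ext K
      simp only [mem_powersetCard, mem_filter, subset_erase]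
      tauto
    rw [h1, hpc, sum_filter]
  rw [sum_congr rfl hrw, sum_comm] at hsum
  have inner : ∀ K ∈ Mᶜ.powersetCard t, ∑ x ∈ Mᶜ, (if x ∉ K then g K else 0)
      = ((Fintype.card V - (m - 1) - t : ℕ) : ℚ) * g K := by
    intro K hK
    have hKM : K ⊆ Mᶜ := (mem_powersetCard.mp hK).1
    have hKc : K.card = t := (mem_powersetCard.mp hK).2
    rw [← sum_filter, sum_const]
    have h2 : (Mᶜ.filter (fun x => x ∉ K)) = Mᶜ \ K := by
      ext a; simp only [mem_filter, mem_sdiff]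
    rw [h2, card_sdiff_of_subset hKM, card_compl, hM, hKc, nsmul_eq_mul]
  rw [sum_congr rfl inner, ← mul_sum] at hsum
  have hpos : 0 < Fintype.card V - (m - 1) - t := by omega
  have hc : ((Fintype.card V - (m - 1) - t : ℕ) : ℚ) ≠ 0 :=
    Nat.cast_ne_zero.mpr hpos.ne'
  exact (mul_eq_zero.mp hsum).resolve_left hc

lemma alldown (g : Finset V → ℚ) (t m₀ : ℕ) (hm₀ : m₀ + t ≤ Fintype.card V)
    (h : ∀ M : Finset V, M.card = m₀ → ∑ K ∈ Mᶜ.powersetCard t, g K = 0) :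
    ∀ m ≤ m₀, ∀ M : Finset V, M.card = m → ∑ K ∈ Mᶜ.powersetCard t, g K = 0 := by
  have H : ∀ j, ∀ M : Finset V, M.card = m₀ - j → ∑ K ∈ Mᶜ.powersetCard t, g K = 0 := by
    intro j
    induction j with
    | zero => simpa using h
    | succ j ih =>
      rcases Nat.eq_zero_or_pos (m₀ - j) with h0 | hpos
      · intro M hM; exact ih M (by omega)
      · intro M hM
        exact stepdown g t (m₀ - j) hpos (by omega) ih M (by omega)
  intro m hm M hM
  exact H (m₀ - m) M (by omega)
end StepDown

open scoped Classical in
/-- If `t ≤ min(k, v - k)` and `G`, `G'` (on a common `v`-element vertex set)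
    are `k`-hypomorphic up to complementation, then they are `t`-hypomorphic up
    to complementation. -/
theorem hypo_down {V : Type*} [Fintype V] (G G' : SimpleGraph V) (k t : ℕ)
    (ht : t ≤ min k (Fintype.card V - k)) (h : HypoUpToCompl G G' k) :
    HypoUpToCompl G G' t := by
  classical
  obtain ⟨htk, htv⟩ := le_min_iff.mp ht
  intro K hK
  rcases Nat.eq_zero_or_pos t with ht0 | htpos
  · subst ht0
    rw [card_eq_zero.mp hK]
    exact Or.inl ⟨⟨Equiv.refl _, fun {a b} => absurd a.2 (by simp)⟩⟩
  · have hkv : k ≤ Fintype.card V := by omega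
    set g : Finset V → ℚ := fun A =>
      (if IsoUpToCompl (G.induce (A : Set V)) (G'.induce (K : Set V)) then (1 : ℚ) else 0)
        - (if IsoUpToCompl (G'.induce (A : Set V)) (G'.induce (K : Set V)) then (1 : ℚ) else 0)
      with hg
    have hsum : ∀ L : Finset V, L.card = k → ∑ A ∈ L.powersetCard t, g A = 0 := by
      intro L hL
      rw [hg]
      rw [Finset.sum_sub_distrib,
        key_sum G G' (G'.induce (K : Set V)) t L (h L hL), sub_self]
    have hcompl : ∀ M : Finset V, M.card = Fintype.card V - k →
        ∑ A ∈ Mᶜ.powersetCard t, g A = 0 := by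
      intro M hM
      refine hsum Mᶜ ?_
      rw [card_compl, hM]; omega
    have hall := alldown g t (Fintype.card V - k) (by omega) hcompl
    have hrels : ∀ m ≤ t, ∀ M ⊆ (univ : Finset V), M.card = m →
        ∑ A ∈ ((univ : Finset V) \ M).powersetCard t, g A = 0 := by
      intro m hm M _ hMc
      rw [← compl_eq_univ_sdiff]
      exact hall m (by omega) M hMc
    have hzero := claim_lemma (Fintype.card V) t univ g card_univ (by omega) hrels
      K (subset_univ K) hK
    have hself : IsoUpToCompl (G'.induce (K : Set V)) (G'.induce (K : Set V)) :=
      Or.inl ⟨Iso.refl⟩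
    by_contra hc
    rw [hg] at hzero
    simp only [if_pos hself, if_neg hc] at hzero
    norm_num at hzero
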